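/- arXiv:1804.07367 — 2 statements merged into one kernel-verified Lean document; each statement's English description precedes it below -/
import Mathlib

section
/- If k and k' are Brauer equivalent number fields, then their Galois kernels coincide: the maximal subfield of k that is Galois over ℚ is isomorphic to the maximal subfield of k' that is Galois over ℚ. -/
/- Preliminary definitions: an abstract Brauer-group theory (the Brauer group
functor together with restriction maps and the class map on algebras), Brauer
equivalence of number fields, quaternion algebras, ramification at finite and
infinite places, splitting of rational primes, orders, etc. -/

open NumberField Module IsDedekindDomain
open scoped TensorProduct

noncomputable section

/-- An assignment, to every field, of its Brauer group, together with
restriction maps induced by field embeddings and the map sending a central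
simple algebra to its Brauer class. -/
structure BrauerTheory : Type 1 where
  /-- the Brauer group of a field -/
  Br : ∀ (K : Type) [Field K], CommGrpCat.{0}
  /-- restriction along a field embedding, `[B] ↦ [B ⊗ K]` -/
  res : ∀ {F K : Type} [Field F] [Field K], (F →+* K) → (Br F ⟶ Br K)
  /-- the Brauer class of a central simple algebra -/
  cls : ∀ (K : Type) [Field K] (A : Type) [Ring A] [Algebra K A], Br K

/-- Two number fields `k` and `k'` are *Brauer equivalent* if there is an
isomorphism of their Brauer groups commuting with the restriction maps coming
from all common subfields and with the restriction maps to all common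
overfields. -/
def BrauerEquivalent (T : BrauerTheory) (k k' : Type) [Field k] [Field k'] : Prop :=
  ∃ Φ : T.Br k ≃* T.Br k',
    (∀ (F : Type) [Field F] [NumberField F] [Algebra F k] [Algebra F k'] (x : T.Br F),
        Φ (T.res (algebraMap F k) x) = T.res (algebraMap F k') x) ∧
    (∀ (L : Type) [Field L] [NumberField L] [Algebra k L] [Algebra k' L] (x : T.Br k),
        T.res (algebraMap k' L) (Φ x) = T.res (algebraMap k L) x)

/-- A quaternion algebra over `F` : a 4-dimensional central simple `F`-algebra. -/
def IsQuaternionAlgebra (F A : Type) [Field F] [Ring A] [Algebra F A] : Prop :=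
  Algebra.IsCentral F A ∧ IsSimpleRing A ∧ Module.finrank F A = 4

/-- An `F`-algebra `A` is ramified at a finite place `v` of the number field `F`
if `A ⊗_F F_v` is a division algebra. -/
def RamifiedAtFin (F : Type) [Field F] [NumberField F]
    (A : Type) [Ring A] [Algebra F A]
    (v : HeightOneSpectrum (𝓞 F)) : Prop :=
  ∀ x : (v.adicCompletion F) ⊗[F] A, x ≠ 0 → IsUnit x

/-- An `F`-algebra `A` is ramified at an infinite place `v` of the number field
`F` if `A ⊗_F F_v` is a division algebra. -/
def RamifiedAtInf (F : Type) [Field F] [NumberField F]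
    (A : Type) [Ring A] [Algebra F A]
    (v : InfinitePlace F) : Prop :=
  ∀ x : v.1.Completion ⊗[F] A, x ≠ 0 → IsUnit x

/-- The set of (nonzero) primes of the ring of integers of `K` lying above the
rational prime `p`. -/
def PrimesOver (K : Type) [Field K] (p : ℕ) : Set (Ideal (𝓞 K)) :=
  {P | P.IsPrime ∧ P ≠ ⊥ ∧ (p : 𝓞 K) ∈ P}

/-- The inertia degree `f(P/p)` of a prime `P` of `K` over the rational prime
`p`, computed as the multiplicity of `p` in the cardinality of the residue
field. -/
def inertiaDegOver (K : Type) [Field K] (p : ℕ) (P : Ideal (𝓞 K)) : ℕ :=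
  (Nat.card ((𝓞 K) ⧸ P)).factorization p

/-- The ramification index `e(P/p)` of a prime `P` of `K` over the rational
prime `p`. -/
def ramIdxOver (K : Type) [Field K] (p : ℕ) (P : Ideal (𝓞 K)) : ℕ :=
  Ideal.ramificationIdx' (Ideal.span {(p : ℤ)}) P

/-- A rational prime `p` is unramified in the number field `K`. -/
def UnramifiedIn (K : Type) [Field K] (p : ℕ) : Prop :=
  ∀ P ∈ PrimesOver K p, ramIdxOver K p P = 1

/-- A rational prime `p` splits completely in the number field `K`. -/
def SplitsCompletely (K : Type) [Field K] (p : ℕ) : Prop :=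
  ∀ P ∈ PrimesOver K p, ramIdxOver K p P = 1 ∧ inertiaDegOver K p P = 1

/-- A finite prime `v` of `F` splits completely in the extension `K/F`. -/
def SplitsCompletelyAt (F K : Type) [Field F] [Field K] [Algebra F K]
    (v : Ideal (𝓞 F)) : Prop :=
  ∀ P : Ideal (𝓞 K), P.IsPrime → P ≠ ⊥ → P.comap (algebraMap (𝓞 F) (𝓞 K)) = v →
    Ideal.ramificationIdx' v P = 1 ∧
    Ideal.inertiaDeg' v P = 1

/-- A finite prime `v` of `F` is unramified in the extension `K/F`. -/
def UnramifiedAtRel (F K : Type) [Field F] [Field K] [Algebra F K]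
    (v : Ideal (𝓞 F)) : Prop :=
  ∀ P : Ideal (𝓞 K), P.IsPrime → P ≠ ⊥ → P.comap (algebraMap (𝓞 F) (𝓞 K)) = v →
    Ideal.ramificationIdx' v P = 1

/-- The local degree `[K_P : F_v] = e(P/v) · f(P/v)` of the extension `K/F` at a
prime `P` of `K` lying over the prime `v` of `F`. -/
def localDegreeAt (F K : Type) [Field F] [Field K] [Algebra F K]
    (v : Ideal (𝓞 F)) (P : Ideal (𝓞 K)) : ℕ :=
  Ideal.ramificationIdx' v P *
    Ideal.inertiaDeg' v P

/-- The Galois kernel of a number field `k`: the maximal subfield of `k` which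
is Galois over `ℚ`. -/
def galoisKernel (k : Type) [Field k] [NumberField k] : IntermediateField ℚ k :=
  ⨆ E ∈ {E : IntermediateField ℚ k | IsGalois ℚ E}, E

/-- An `𝓞 K`-order in a `K`-algebra `A` : a subring which is an `𝓞 K`-submodule,
finitely generated as a `ℤ`-module, and containing a `K`-basis of `A`. -/
def IsOrder (K A : Type) [Field K] [Ring A] [Algebra K A] (O : Subring A) : Prop :=
  (∀ (c : 𝓞 K), ∀ x ∈ O, algebraMap K A (algebraMap (𝓞 K) K c) * x ∈ O) ∧
  (∃ s : Finset A, ((Submodule.span ℤ (s : Set A) : Submodule ℤ A) : Set A) = (O : Set A)) ∧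
  Submodule.span K (O : Set A) = ⊤

/-- A maximal order in a `K`-algebra `A`. -/
def IsMaximalOrder (K A : Type) [Field K] [Ring A] [Algebra K A] (O : Subring A) : Prop :=
  IsOrder K A O ∧ ∀ O' : Subring A, IsOrder K A O' → O ≤ O' → O' = O

/-- A totally positive element of a number field. -/
def TotallyPositive (K : Type) [Field K] (a : K) : Prop :=
  ∀ φ : K →+* ℂ, ComplexEmbedding.IsReal φ → 0 < (φ a).re

/-- A number field has narrow class number one : every nonzero ideal of its ring
of integers is generated by a totally positive element. -/
def NarrowClassNumberOne (K : Type) [Field K] : Prop :=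
  ∀ I : Ideal (𝓞 K), I ≠ ⊥ →
    ∃ a : 𝓞 K, I = Ideal.span {a} ∧ TotallyPositive K (algebraMap (𝓞 K) K a)

set_option maxHeartbeats 1000000
set_option synthInstance.maxHeartbeats 400000
set_option linter.unusedSectionVars false
set_option linter.unusedVariables false

open scoped nonZeroDivisors

section AuxiliaryLemmas

variable (K : Type) [Field K] [NumberField K]

lemma PO.isMaximal {p : ℕ} {P : Ideal (𝓞 K)} (hP : P ∈ PrimesOver K p) : P.IsMaximal :=
  Ideal.IsPrime.isMaximal hP.1 hP.2.1

lemma PO.finiteQuot {p : ℕ} {P : Ideal (𝓞 K)} (hP : P ∈ PrimesOver K p) :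
    Finite ((𝓞 K) ⧸ P) := by
  rw [← Ideal.absNorm_ne_zero_iff]
  simp [Ideal.absNorm_eq_zero_iff, hP.2.1]

lemma PO.comap_int {p : ℕ} (hp : p.Prime) {P : Ideal (𝓞 K)} (hP : P ∈ PrimesOver K p) :
    P.comap (algebraMap ℤ (𝓞 K)) = Ideal.span {(p : ℤ)} := by
  have hpZ : Prime (p : ℤ) := Nat.prime_iff_prime_int.mp hp
  have hsp : (Ideal.span {(p : ℤ)}).IsPrime :=
    (Ideal.span_singleton_prime hpZ.ne_zero).mpr hpZ
  have hmax : (Ideal.span {(p : ℤ)}).IsMaximal :=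
    hsp.isMaximal (by simp [Ideal.span_singleton_eq_bot, hpZ.ne_zero, hp.ne_zero])
  refine (hmax.eq_of_le (Ideal.comap_ne_top _ hP.1.ne_top) ?_).symm
  rw [Ideal.span_le]
  simp only [Set.singleton_subset_iff, SetLike.mem_coe, Ideal.mem_comap]
  have : (algebraMap ℤ (𝓞 K)) ((p : ℕ) : ℤ) = (p : 𝓞 K) := by push_cast; ring
  rw [this]
  exact hP.2.2

lemma PO.dvd_card {p : ℕ} (hp : p.Prime) {P : Ideal (𝓞 K)} (hP : P ∈ PrimesOver K p) :
    p ∣ Nat.card ((𝓞 K) ⧸ P) := by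
  haveI := PO.finiteQuot K hP
  haveI := (PO.isMaximal K hP)
  have h0 : ((p : ℕ) : (𝓞 K) ⧸ P) = 0 := by
    rw [← map_natCast (Ideal.Quotient.mk P), Ideal.Quotient.eq_zero_iff_mem]
    exact hP.2.2
  have h1 : addOrderOf (1 : (𝓞 K) ⧸ P) ∣ p := by
    rw [addOrderOf_dvd_iff_nsmul_eq_zero, nsmul_eq_mul, mul_one, h0]
  have hne : (1 : (𝓞 K) ⧸ P) ≠ 0 := by
    simpa using P.ne_top_iff_one.mp hP.1.ne_top ∘ Ideal.Quotient.eq_zero_iff_mem.mp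
  have h2 : addOrderOf (1 : (𝓞 K) ⧸ P) = p := by
    rcases (Nat.Prime.eq_one_or_self_of_dvd hp _ h1) with h | h
    · exact absurd (by simpa using h) hne
    · exact h
  calc p = addOrderOf (1 : (𝓞 K) ⧸ P) := h2.symm
    _ ∣ Nat.card ((𝓞 K) ⧸ P) := addOrderOf_dvd_natCard _

end AuxiliaryLemmas

section TowerLemmas

variable (F K : Type) [Field F] [Field K] [NumberField F] [NumberField K] [Algebra F K]

lemma PO.algebraMap_injective : Function.Injective (algebraMap (𝓞 F) (𝓞 K)) := by
  have h : Function.Injective (algebraMap (𝓞 F) K) := by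
    rw [IsScalarTower.algebraMap_eq (𝓞 F) F K]
    exact (algebraMap F K).injective.comp (NumberField.RingOfIntegers.coe_injective)
  intro a b hab
  apply h
  rw [IsScalarTower.algebraMap_eq (𝓞 F) (𝓞 K) K, RingHom.comp_apply, RingHom.comp_apply, hab]

lemma PO.comap_mem {p : ℕ} (hp : p.Prime) {P : Ideal (𝓞 K)} (hP : P ∈ PrimesOver K p) :
    P.comap (algebraMap (𝓞 F) (𝓞 K)) ∈ PrimesOver F p := by
  haveI := hP.1
  refine ⟨Ideal.IsPrime.comap _, ?_, ?_⟩
  · intro hbot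
    have hmem : ((p : ℕ) : 𝓞 F) ∈ P.comap (algebraMap (𝓞 F) (𝓞 K)) := by
      rw [Ideal.mem_comap, map_natCast]
      exact hP.2.2
    rw [hbot] at hmem
    simp only [Ideal.mem_bot] at hmem
    exact_mod_cast hp.ne_zero (by exact_mod_cast hmem)
  · rw [Ideal.mem_comap, map_natCast]
    exact hP.2.2

lemma PO.inertia_dvd {p : ℕ} (hp : p.Prime) {P : Ideal (𝓞 K)} (hP : P ∈ PrimesOver K p) :
    inertiaDegOver F p (P.comap (algebraMap (𝓞 F) (𝓞 K))) ∣ inertiaDegOver K p P := by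
  set Q := P.comap (algebraMap (𝓞 F) (𝓞 K)) with hQ
  have hQmem : Q ∈ PrimesOver F p := PO.comap_mem F K hp hP
  haveI := PO.isMaximal K hP
  haveI := PO.isMaximal F hQmem
  haveI := PO.finiteQuot K hP
  haveI := PO.finiteQuot F hQmem
  letI : Field ((𝓞 F) ⧸ Q) := Ideal.Quotient.field Q
  letI : Field ((𝓞 K) ⧸ P) := Ideal.Quotient.field P
  let φ : (𝓞 F) ⧸ Q →+* (𝓞 K) ⧸ P := Ideal.quotientMap P (algebraMap (𝓞 F) (𝓞 K)) (le_of_eq hQ)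
  letI : Algebra ((𝓞 F) ⧸ Q) ((𝓞 K) ⧸ P) := φ.toAlgebra
  haveI : Fintype ((𝓞 F) ⧸ Q) := Fintype.ofFinite _
  haveI : Fintype ((𝓞 K) ⧸ P) := Fintype.ofFinite _
  have hcard : Fintype.card ((𝓞 K) ⧸ P)
      = Fintype.card ((𝓞 F) ⧸ Q) ^ (finrank ((𝓞 F) ⧸ Q) ((𝓞 K) ⧸ P)) :=
    card_eq_pow_finrank
  rw [inertiaDegOver, inertiaDegOver, Nat.card_eq_fintype_card, Nat.card_eq_fintype_card,
    hcard, Nat.factorization_pow, Finsupp.smul_apply, smul_eq_mul]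
  exact dvd_mul_left _ _

lemma PO.exists_over {p : ℕ} (hp : p.Prime) {Q : Ideal (𝓞 F)} (hQ : Q ∈ PrimesOver F p) :
    ∃ P ∈ PrimesOver K p, P.comap (algebraMap (𝓞 F) (𝓞 K)) = Q := by
  haveI := hQ.1
  haveI : Algebra.IsIntegral (𝓞 F) (𝓞 K) := by
    haveI : Algebra.IsIntegral ℤ (𝓞 K) := inferInstance
    exact Algebra.IsIntegral.tower_top (R := ℤ)
  obtain ⟨P, hle, hprime, hcomap⟩ :=
    Ideal.exists_ideal_over_prime_of_isIntegral Q (⊥ : Ideal (𝓞 K)) (by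
      intro x hx
      simp only [Ideal.mem_comap, Ideal.mem_bot] at hx
      have : x = 0 := PO.algebraMap_injective F K (by simpa using hx)
      simp [this])
  refine ⟨P, ⟨hprime, ?_, ?_⟩, hcomap⟩
  · intro hbot
    rw [hbot] at hcomap
    apply hQ.2.1
    rw [← hcomap]
    ext x
    simp only [Ideal.mem_comap, Ideal.mem_bot]
    constructor
    · intro hx; exact PO.algebraMap_injective F K (by simpa using hx)
    · intro hx; simp [hx]
  · rw [← hcomap] at hQ
    have := hQ.2.2
    rwa [Ideal.mem_comap, map_natCast] at this

lemma PO.unram_below {p : ℕ} (hp : p.Prime) {Q : Ideal (𝓞 F)} (hQ : Q ∈ PrimesOver F p)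
    {P : Ideal (𝓞 K)} (hP : P ∈ PrimesOver K p)
    (hcomap : P.comap (algebraMap (𝓞 F) (𝓞 K)) = Q)
    (h1 : ramIdxOver K p P = 1) : ramIdxOver F p Q = 1 := by
  haveI := hP.1
  haveI := hQ.1
  have hmapQ : Ideal.map (algebraMap (𝓞 F) (𝓞 K)) Q ≠ ⊥ := fun h =>
    hQ.2.1 ((Ideal.map_eq_bot_iff_of_injective (PO.algebraMap_injective F K)).mp h)
  have hintinj : Function.Injective (algebraMap ℤ (𝓞 K)) := by
    intro x y hxy
    have h3 := congrArg (algebraMap (𝓞 K) K) hxy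
    rw [← IsScalarTower.algebraMap_apply, ← IsScalarTower.algebraMap_apply] at h3
    have h4 : algebraMap ℤ K = Int.castRingHom K := by
      ext n; simp
    rw [h4] at h3
    simp only [eq_intCast] at h3
    exact_mod_cast h3
  have hmapp : Ideal.map (algebraMap ℤ (𝓞 K)) (Ideal.span {(p : ℤ)}) ≠ ⊥ := fun h => by
    have h5 := (Ideal.map_eq_bot_iff_of_injective hintinj).mp h
    rw [Ideal.span_singleton_eq_bot] at h5
    exact hp.ne_zero (by exact_mod_cast h5)
  have hle : Ideal.map (algebraMap (𝓞 F) (𝓞 K)) Q ≤ P := by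
    rw [Ideal.map_le_iff_le_comap, hcomap]
  have htower := Ideal.ramificationIdx_algebra_tower (R := ℤ) (S := 𝓞 F) (T := 𝓞 K)
    (p := Ideal.span {(p : ℤ)}) (P := Q) (Q := P) hmapQ hmapp hle
  rw [ramIdxOver] at h1 ⊢
  rw [h1] at htower
  exact Nat.eq_one_of_mul_eq_one_right htower.symm

end TowerLemmas

section GaloisLemmas

lemma PO.map_equiv_eq_comap {R : Type*} [CommRing R] (e : R ≃+* R) (I : Ideal R) :
    Ideal.map e I = Ideal.comap e.symm I := by
  apply le_antisymm
  · rw [Ideal.map_le_iff_le_comap]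
    intro x hx
    rw [Ideal.mem_comap, Ideal.mem_comap]
    simpa using hx
  · intro x hx
    rw [Ideal.mem_comap] at hx
    have h := Ideal.mem_map_of_mem e hx
    simpa using h

variable (F : Type) [Field F] [NumberField F]

lemma PO.exists_conj [IsGalois ℚ F] {p : ℕ} (hp : p.Prime) {Q Q' : Ideal (𝓞 F)}
    (hQ : Q ∈ PrimesOver F p) (hQ' : Q' ∈ PrimesOver F p) :
    ∃ σ : (𝓞 F) ≃ₐ[ℤ] (𝓞 F), Ideal.map σ Q = Q' := by
  haveI := hQ.1
  haveI := hQ'.1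
  let τ : (F ≃ₐ[ℚ] F) ≃* ((𝓞 F) ≃ₐ[ℤ] (𝓞 F)) := galRestrict ℤ ℚ F (𝓞 F)
  by_contra hcon
  push_neg at hcon
  have hmax : ∀ σ : F ≃ₐ[ℚ] F, (Ideal.map (τ σ) Q).IsMaximal := by
    intro σ
    have heq : Ideal.map (τ σ) Q
        = Ideal.comap ((τ σ).symm.toRingEquiv : (𝓞 F) →+* (𝓞 F)) Q := by
      have := PO.map_equiv_eq_comap ((τ σ).toRingEquiv) Q
      convert this using 2 <;> rfl
    rw [heq]
    exact Ideal.comap_isMaximal_of_surjective _ ((τ σ).symm.surjective) (H := PO.isMaximal F hQ)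
  have hnotsub : ¬ ((Q' : Set (𝓞 F)) ⊆ ⋃ σ ∈ (Finset.univ : Finset (F ≃ₐ[ℚ] F)),
      ((Ideal.map (τ σ) Q : Ideal (𝓞 F)) : Set (𝓞 F))) := by
    intro hsub
    obtain ⟨σ, _, hle⟩ := (Ideal.subset_union_prime 1 1 (fun σ _ _ _ => (hmax σ).isPrime)).mp hsub
    exact hcon (τ σ) ((PO.isMaximal F hQ').eq_of_le (hmax σ).ne_top hle).symm
  rw [Set.not_subset] at hnotsub
  obtain ⟨x, hxQ', hxnot⟩ := hnotsub
  have hxdvd : x ∣ ∏ σ : F ≃ₐ[ℚ] F, (τ σ) x := by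
    have h1 : (τ 1) x = x := by
      rw [map_one τ]; rfl
    calc x = (τ 1) x := h1.symm
      _ ∣ ∏ σ : F ≃ₐ[ℚ] F, (τ σ) x := Finset.dvd_prod_of_mem _ (Finset.mem_univ 1)
  have hNQ' : (∏ σ : F ≃ₐ[ℚ] F, (τ σ) x) ∈ Q' := by
    obtain ⟨c, hc⟩ := hxdvd
    rw [hc]
    exact Ideal.mul_mem_right _ _ hxQ'
  obtain ⟨m, hm⟩ : ∃ m : ℤ, (∏ σ : F ≃ₐ[ℚ] F, (τ σ) x) = algebraMap ℤ (𝓞 F) m :=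
    ⟨_, prod_galRestrict_eq_norm ℤ ℚ F (𝓞 F) x⟩
  have hmQ' : m ∈ Q'.comap (algebraMap ℤ (𝓞 F)) := by
    rw [Ideal.mem_comap, ← hm]; exact hNQ'
  rw [PO.comap_int F hp hQ', ← PO.comap_int F hp hQ] at hmQ'
  have hNQ : (∏ σ : F ≃ₐ[ℚ] F, (τ σ) x) ∈ Q := by
    rw [hm]; exact hmQ'
  have hfactor : ∃ σ ∈ (Finset.univ : Finset (F ≃ₐ[ℚ] F)), (τ σ) x ∈ Q :=
    (Ideal.IsPrime.prod_mem_iff).mp hNQ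
  obtain ⟨σ, _, hσ⟩ := hfactor
  apply hxnot
  have hx : x ∈ Ideal.map (τ σ⁻¹) Q := by
    have h2 : (τ σ⁻¹) = (τ σ).symm := by
      rw [map_inv τ]; rfl
    rw [h2]
    have h3 : Ideal.map ((τ σ).symm.toRingEquiv) Q
        = Ideal.comap ((τ σ).toRingEquiv : (𝓞 F) →+* (𝓞 F)) Q := by
      have := PO.map_equiv_eq_comap ((τ σ).symm.toRingEquiv) Q
      convert this using 2 <;> rfl
    have h4 : x ∈ Ideal.comap ((τ σ).toRingEquiv : (𝓞 F) →+* (𝓞 F)) Q := by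
      rw [Ideal.mem_comap]; exact hσ
    rw [← h3] at h4
    convert h4 using 2 <;> rfl
  exact Set.mem_biUnion (Finset.mem_univ σ⁻¹) hx

lemma PO.inertia_eq [IsGalois ℚ F] {p : ℕ} (hp : p.Prime) {Q Q' : Ideal (𝓞 F)}
    (hQ : Q ∈ PrimesOver F p) (hQ' : Q' ∈ PrimesOver F p) :
    inertiaDegOver F p Q = inertiaDegOver F p Q' := by
  obtain ⟨σ, hσ⟩ := PO.exists_conj F hp hQ hQ'
  have hmap : Q' = Ideal.map (σ.toRingEquiv : (𝓞 F) →+* (𝓞 F)) Q := by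
    rw [← hσ]; rfl
  let e : ((𝓞 F) ⧸ Q) ≃+* ((𝓞 F) ⧸ Q') := Ideal.quotientEquiv Q Q' σ.toRingEquiv hmap
  rw [inertiaDegOver, inertiaDegOver, Nat.card_congr e.toEquiv]

end GaloisLemmas

section FinitenessLemmas

variable (K : Type) [Field K] [NumberField K]

lemma PO.different_ne_bot : differentIdeal ℤ (𝓞 K) ≠ ⊥ := by
  intro hbot
  have h := coeIdeal_differentIdeal ℤ ℚ K (𝓞 K)
  rw [hbot] at h
  simp only [FractionalIdeal.coeIdeal_bot] at h
  have h2 : FractionalIdeal.dual ℤ ℚ (1 : FractionalIdeal (𝓞 K)⁰ K) = 0 :=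
    inv_eq_zero.mp h.symm
  have h1 : (1 : FractionalIdeal (𝓞 K)⁰ K) ≠ 0 := one_ne_zero
  exact FractionalIdeal.dual_ne_zero ℤ ℚ h1 h2

lemma PO.ram_dvd_disc {p : ℕ} (hp : p.Prime) {P : Ideal (𝓞 K)} (hP : P ∈ PrimesOver K p)
    (hram : ramIdxOver K p P ≠ 1) :
    p ∣ Ideal.absNorm (differentIdeal ℤ (𝓞 K)) := by
  haveI := hP.1
  have hmax : (Ideal.span {(p : ℤ)}).IsMaximal := by
    have hpZ : Prime (p : ℤ) := Nat.prime_iff_prime_int.mp hp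
    exact ((Ideal.span_singleton_prime hpZ.ne_zero).mpr hpZ).isMaximal
      (by simp [Ideal.span_singleton_eq_bot, hpZ.ne_zero, hp.ne_zero])
  have hspan_ne : (Ideal.span {(p : ℤ)} : Ideal ℤ) ≠ ⊥ := by
    simp only [Ne, Ideal.span_singleton_eq_bot]
    exact_mod_cast hp.ne_zero
  have hmaple : Ideal.map (algebraMap ℤ (𝓞 K)) (Ideal.span {(p : ℤ)}) ≤ P := by
    rw [Ideal.map_le_iff_le_comap, Ideal.span_le]
    simp only [Set.singleton_subset_iff, SetLike.mem_coe, Ideal.mem_comap]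
    have : (algebraMap ℤ (𝓞 K)) ((p : ℕ) : ℤ) = (p : 𝓞 K) := by push_cast; ring
    rw [this]; exact hP.2.2
  have hintinj : Function.Injective (algebraMap ℤ (𝓞 K)) := by
    intro x y hxy
    have h3 := congrArg (algebraMap (𝓞 K) K) hxy
    rw [← IsScalarTower.algebraMap_apply, ← IsScalarTower.algebraMap_apply] at h3
    have h4 : algebraMap ℤ K = Int.castRingHom K := by ext n; simp
    rw [h4] at h3
    simp only [eq_intCast] at h3
    exact_mod_cast h3
  have hmapne : Ideal.map (algebraMap ℤ (𝓞 K)) (Ideal.span {(p : ℤ)}) ≠ ⊥ := fun h => by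
    exact hspan_ne ((Ideal.map_eq_bot_iff_of_injective hintinj).mp h)
  have hene : ramIdxOver K p P ≠ 0 :=
    Ideal.IsDedekindDomain.ramificationIdx_ne_zero hmapne hP.1 hmaple
  have he2 : 2 ≤ ramIdxOver K p P := by omega
  have hdvd : P ^ (ramIdxOver K p P - 1) ∣ differentIdeal ℤ (𝓞 K) :=
    pow_sub_one_dvd_differentIdeal (A := ℤ) (B := 𝓞 K) P (ramIdxOver K p P) hspan_ne
      (Ideal.dvd_iff_le.mpr (Ideal.le_pow_ramificationIdx))
  have hPdvd : P ∣ differentIdeal ℤ (𝓞 K) :=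
    dvd_trans (dvd_pow_self P (by omega : ramIdxOver K p P - 1 ≠ 0)) hdvd
  have hle : differentIdeal ℤ (𝓞 K) ≤ P := Ideal.le_of_dvd hPdvd
  have hnorm : Ideal.absNorm P ∣ Ideal.absNorm (differentIdeal ℤ (𝓞 K)) :=
    Ideal.absNorm_dvd_absNorm_of_le hle
  refine dvd_trans ?_ hnorm
  rw [Ideal.absNorm_apply, Submodule.cardQuot_apply]
  exact PO.dvd_card K hp hP

lemma PO.finite_ramified : {p : ℕ | p.Prime ∧ ¬ UnramifiedIn K p}.Finite := by
  have hD : Ideal.absNorm (differentIdeal ℤ (𝓞 K)) ≠ 0 := by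
    rw [Ne, Ideal.absNorm_eq_zero_iff]
    exact PO.different_ne_bot K
  apply Set.Finite.subset (Set.finite_Icc 0 (Ideal.absNorm (differentIdeal ℤ (𝓞 K))))
  rintro p ⟨hp, hram⟩
  rw [UnramifiedIn] at hram
  push_neg at hram
  obtain ⟨P, hP, hne⟩ := hram
  exact Set.mem_Icc.mpr ⟨Nat.zero_le _, Nat.le_of_dvd (Nat.pos_of_ne_zero hD)
    (PO.ram_dvd_disc K hp hP hne)⟩

end FinitenessLemmas

section GaloisKernelLemmas

lemma gk_isGalois (k : Type) [Field k] [NumberField k] : IsGalois ℚ (galoisKernel k) := by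
  have hnormal : Normal ℚ (galoisKernel k) := by
    rw [galoisKernel, ← iSup_subtype'' {E : IntermediateField ℚ k | IsGalois ℚ E}
      (fun E => E)]
    haveI : ∀ E : {E : IntermediateField ℚ k | IsGalois ℚ E},
        Normal ℚ ((E : IntermediateField ℚ k) : IntermediateField ℚ k) := fun E =>
      E.2.to_normal
    exact IntermediateField.normal_iSup ℚ k _ (h := this)
  haveI := hnormal
  constructor

lemma gk_le (k : Type) [Field k] [NumberField k] (E : IntermediateField ℚ k)
    (hE : IsGalois ℚ E) : E ≤ galoisKernel k := by
  rw [galoisKernel]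
  exact le_iSup₂ (f := fun (E : IntermediateField ℚ k) (_ : E ∈ _) => E) E hE

end GaloisKernelLemmas

section SplitLemmas

variable (K : Type) [Field K] [NumberField K]

lemma PO.div_all (E : IntermediateField ℚ K) [IsGalois ℚ E] {p : ℕ} (hp : p.Prime)
    {Q : Ideal (𝓞 E)} (hQ : Q ∈ PrimesOver E p) {P : Ideal (𝓞 K)}
    (hP : P ∈ PrimesOver K p) : inertiaDegOver E p Q ∣ inertiaDegOver K p P := by
  have h1 := PO.comap_mem E K hp hP
  rw [PO.inertia_eq E hp hQ h1]
  exact PO.inertia_dvd E K hp hP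

lemma PO.splits_completely (E : IntermediateField ℚ K) [IsGalois ℚ E] {p : ℕ}
    (hp : p.Prime) (hunr : UnramifiedIn K p)
    (hf : ∀ Q ∈ PrimesOver E p, inertiaDegOver E p Q = 1) : SplitsCompletely E p := by
  intro Q hQmem
  have hQ : Q ∈ PrimesOver E p := hQmem
  obtain ⟨P, hP, hcomap⟩ := PO.exists_over E K hp hQ
  exact ⟨PO.unram_below E K hp hQ hP hcomap (hunr P hP), hf Q hQ⟩

end SplitLemmas

lemma PO.key (k k' : Type) [Field k] [Field k'] [NumberField k] [NumberField k']
    (hgcd : ∀ p : ℕ, p.Prime → UnramifiedIn k p → UnramifiedIn k' p →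
      ∀ d : ℕ, (∀ P ∈ PrimesOver k p, d ∣ inertiaDegOver k p P) ↔
               (∀ P ∈ PrimesOver k' p, d ∣ inertiaDegOver k' p P)) :
    ∃ S : Set ℕ, S.Finite ∧ ∀ p : ℕ, p.Prime → p ∉ S →
      (∃ P ∈ PrimesOver k p, inertiaDegOver k p P = 1) →
      SplitsCompletely (galoisKernel k') p := by
  refine ⟨{p : ℕ | p.Prime ∧ ¬ UnramifiedIn k p} ∪ {p : ℕ | p.Prime ∧ ¬ UnramifiedIn k' p},
    (PO.finite_ramified k).union (PO.finite_ramified k'), ?_⟩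
  intro p hp hpS hdeg1
  have hunrk : UnramifiedIn k p := by
    by_contra h; exact hpS (Or.inl ⟨hp, h⟩)
  have hunrk' : UnramifiedIn k' p := by
    by_contra h; exact hpS (Or.inr ⟨hp, h⟩)
  haveI := gk_isGalois k'
  apply PO.splits_completely k' (galoisKernel k') hp hunrk'
  intro Q hQ
  have hdvd' : ∀ P' ∈ PrimesOver k' p, inertiaDegOver (galoisKernel k') p Q ∣
      inertiaDegOver k' p P' := fun P' hP' => PO.div_all k' (galoisKernel k') hp hQ hP'
  have hdvdk := (hgcd p hp hunrk hunrk' (inertiaDegOver (galoisKernel k') p Q)).mpr hdvd'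
  obtain ⟨P₁, hP₁, hf1⟩ := hdeg1
  have := hdvdk P₁ hP₁
  rw [hf1] at this
  exact Nat.dvd_one.mp this


/-- Brauer equivalent number fields have isomorphic Galois kernels.
The hypotheses record the facts that may be assumed: the Linowitz–McReynolds–
Miller gcd theorem on inertia degrees (stated as equality of the sets of common
divisors), the Chebotarev-type fact that containment (up to finitely many
exceptions) of split primes of Galois extensions of `ℚ` implies containment of
fields, and Brauer's theorem. -/
theorem brauerEquivalent_galoisKernel_iso (T : BrauerTheory)
    (k k' : Type) [Field k] [Field k'] [NumberField k] [NumberField k']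
    (h : BrauerEquivalent T k k')
    (hgcd : ∀ p : ℕ, p.Prime → UnramifiedIn k p → UnramifiedIn k' p →
      ∀ d : ℕ, (∀ P ∈ PrimesOver k p, d ∣ inertiaDegOver k p P) ↔
               (∀ P ∈ PrimesOver k' p, d ∣ inertiaDegOver k' p P))
    (hcheb : ∀ (M N : Type) [Field M] [Field N] [NumberField M] [NumberField N]
      [IsGalois ℚ M] [IsGalois ℚ N],
      (∃ S : Set ℕ, S.Finite ∧ ∀ p : ℕ, p.Prime → p ∉ S →
        SplitsCompletely M p → SplitsCompletely N p) →
      Nonempty (N →+* M))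
    (hbrauerthm : ∀ (K N : Type) [Field K] [Field N] [NumberField K] [NumberField N]
      [IsGalois ℚ N],
      (∃ S : Set ℕ, S.Finite ∧ ∀ p : ℕ, p.Prime → p ∉ S →
        (∃ P ∈ PrimesOver K p, inertiaDegOver K p P = 1) → SplitsCompletely N p) →
      Nonempty (N →+* K)) :
    Nonempty ((galoisKernel k) ≃ₐ[ℚ] (galoisKernel k')) := by
  haveI := gk_isGalois k
  haveI := gk_isGalois k'
  obtain ⟨ι₁⟩ := hbrauerthm k (galoisKernel k') (PO.key k k' hgcd)
  obtain ⟨ι₂⟩ := hbrauerthm k' (galoisKernel k)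
    (PO.key k' k (fun p hp h1 h2 d => (hgcd p hp h2 h1 d).symm))
  let j₁ : (galoisKernel k') →ₐ[ℚ] k := RingHom.equivRatAlgHom _ _ ι₁
  let j₂ : (galoisKernel k) →ₐ[ℚ] k' := RingHom.equivRatAlgHom _ _ ι₂
  let e₁ : (galoisKernel k') ≃ₐ[ℚ] j₁.fieldRange := AlgEquiv.ofInjectiveField j₁
  let e₂ : (galoisKernel k) ≃ₐ[ℚ] j₂.fieldRange := AlgEquiv.ofInjectiveField j₂
  haveI hg1 : IsGalois ℚ j₁.fieldRange := IsGalois.of_algEquiv e₁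
  haveI hg2 : IsGalois ℚ j₂.fieldRange := IsGalois.of_algEquiv e₂
  have hle₁ : j₁.fieldRange ≤ galoisKernel k := gk_le k _ hg1
  have hle₂ : j₂.fieldRange ≤ galoisKernel k' := gk_le k' _ hg2
  let g₁ : (galoisKernel k') →ₐ[ℚ] (galoisKernel k) :=
    (IntermediateField.inclusion hle₁).comp e₁.toAlgHom
  let g₂ : (galoisKernel k) →ₐ[ℚ] (galoisKernel k') :=
    (IntermediateField.inclusion hle₂).comp e₂.toAlgHom
  have hinj₁ : Function.Injective g₁ := g₁.toRingHom.injective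
  have hinj₂ : Function.Injective g₂ := g₂.toRingHom.injective
  have hrank : finrank ℚ (galoisKernel k) = finrank ℚ (galoisKernel k') := by
    apply le_antisymm
    · exact LinearMap.finrank_le_finrank_of_injective (f := g₂.toLinearMap) hinj₂
    · exact LinearMap.finrank_le_finrank_of_injective (f := g₁.toLinearMap) hinj₁
  have hsurj : Function.Surjective g₂ :=
    (LinearMap.injective_iff_surjective_of_finrank_eq_finrank (f := g₂.toLinearMap) hrank).mp
      hinj₂
  exact ⟨AlgEquiv.ofBijective g₂ ⟨hinj₂, hsurj⟩⟩


end
end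

section
/- Let K be a number field with at least one real place unramified in a quaternion algebra A over K, and suppose p₃, p₄ are finite primes of K, not ramified in A, that do not split completely in the class field K(A)/K. If A' is the quaternion algebra over K with Ram(A') = Ram(A) ∪ {p₃, p₄}, then K(A') is a proper subfield of K(A) containing K. Consequently, iterating this construction finitely many times produces a quaternion algebra A* over K with K(A*) = K, i.e., all maximal orders of A* are conjugate. -/
/- Preliminary definitions: an abstract Brauer-group theory (the Brauer group
functor together with restriction maps and the class map on algebras), Brauer
equivalence of number fields, quaternion algebras, ramification at finite and
infinite places, splitting of rational primes, orders, etc. -/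

open NumberField Module IsDedekindDomain
open scoped TensorProduct

noncomputable section

/-- The defining properties of the class field `K(A)` attached to an indefinite
quaternion algebra `A` over `K` (realized as an intermediate field of `ℂ/K`):
a finite abelian extension with `2`-elementary Galois group, unramified at all
finite places, unramified at every infinite place except possibly the real
places of `K` ramified in `A`, and in which every finite prime of `K` ramified
in `A` splits completely. -/
def IsPreClassField (K : Type) [Field K] [NumberField K] [Algebra K ℂ]
    (A : Type) [Ring A] [Algebra K A] (E : IntermediateField K ℂ) : Prop :=
  FiniteDimensional K ↥E ∧ IsGalois K ↥E ∧ (∀ g : ↥E ≃ₐ[K] ↥E, g * g = 1) ∧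
  (∀ v : Ideal (𝓞 K), v.IsPrime → v ≠ ⊥ → UnramifiedAtRel K ↥E v) ∧
  (∀ w : NumberField.InfinitePlace ↥E,
    ((w.comap (algebraMap K ↥E)).IsReal ∧
      ¬ RamifiedAtInf K A (w.comap (algebraMap K ↥E))) → w.IsReal) ∧
  (∀ v : IsDedekindDomain.HeightOneSpectrum (𝓞 K),
    RamifiedAtFin K A v → SplitsCompletelyAt K ↥E v.asIdeal)

/-- `E` is *the* class field `K(A)`: it satisfies the defining properties and is
maximal among all intermediate fields satisfying them. -/
def IsClassField (K : Type) [Field K] [NumberField K] [Algebra K ℂ]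
    (A : Type) [Ring A] [Algebra K A] (E : IntermediateField K ℂ) : Prop :=
  IsPreClassField K A E ∧
  ∀ E' : IntermediateField K ℂ, IsPreClassField K A E' → E' ≤ E

/-- A quaternion algebra over `K` with the same infinite ramification as `A`,
with finite ramification containing that of `A`, whose class field is trivial,
and all of whose maximal orders are conjugate. -/
structure TrivialClassFieldQuat (K : Type) [Field K] [NumberField K] [Algebra K ℂ]
    (A : Type) [Ring A] [Algebra K A] : Type 1 where
  carrier : Type
  [ringC : Ring carrier]
  [algC : Algebra K carrier]
  quat : IsQuaternionAlgebra K carrier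
  raminf : ∀ v : NumberField.InfinitePlace K,
    RamifiedAtInf K carrier v ↔ RamifiedAtInf K A v
  ramfin : ∀ v : IsDedekindDomain.HeightOneSpectrum (𝓞 K),
    RamifiedAtFin K A v → RamifiedAtFin K carrier v
  classfield : ∀ E₀ : IntermediateField K ℂ, IsClassField K carrier E₀ → E₀ = ⊥
  conj : ∀ O O' : Subring carrier,
    IsMaximalOrder K carrier O → IsMaximalOrder K carrier O' →
    ∃ u : carrierˣ, ∀ x : carrier,
      x ∈ O' ↔ (u : carrier) * x * ((u⁻¹ : carrierˣ) : carrier) ∈ O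

/-- A quaternion algebra over `K` whose ramification set is that of `A₀`
enlarged by two given finite primes. -/
structure QuatExtension (K : Type) [Field K] [NumberField K]
    (A₀ : Type) [Ring A₀] [Algebra K A₀]
    (q r : IsDedekindDomain.HeightOneSpectrum (𝓞 K)) : Type 1 where
  carrier : Type
  [ringC : Ring carrier]
  [algC : Algebra K carrier]
  quat : IsQuaternionAlgebra K carrier
  ramfin : ∀ v : IsDedekindDomain.HeightOneSpectrum (𝓞 K),
    RamifiedAtFin K carrier v ↔ (RamifiedAtFin K A₀ v ∨ v = q ∨ v = r)
  raminf : ∀ v : NumberField.InfinitePlace K,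
    RamifiedAtInf K carrier v ↔ RamifiedAtInf K A₀ v

/-- Auxiliary: shrinking step. -/
theorem aux_shrink
    (K : Type) [Field K] [NumberField K] [Algebra K ℂ]
    (A : Type) [Ring A] [Algebra K A]
    (E : IntermediateField K ℂ) (hE : IsClassField K A E)
    (p₃ p₄ : IsDedekindDomain.HeightOneSpectrum (𝓞 K))
    (hs₃ : ¬ SplitsCompletelyAt K ↥E p₃.asIdeal)
    (A' : Type) [Ring A'] [Algebra K A']
    (hRamFin' : ∀ v : IsDedekindDomain.HeightOneSpectrum (𝓞 K),
      RamifiedAtFin K A' v ↔ (RamifiedAtFin K A v ∨ v = p₃ ∨ v = p₄))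
    (hRamInf' : ∀ v : NumberField.InfinitePlace K,
      RamifiedAtInf K A' v ↔ RamifiedAtInf K A v)
    (E' : IntermediateField K ℂ) (hE' : IsClassField K A' E') :
    E' < E := by
  obtain ⟨⟨fd, gal, elem, unram, hinf, hfin⟩, hmax'⟩ := hE'
  have hle : E' ≤ E := by
    apply hE.2
    refine ⟨fd, gal, elem, unram, ?_, ?_⟩
    · intro w ⟨hr, hnr⟩
      exact hinf w ⟨hr, fun h => hnr ((hRamInf' _).1 h)⟩
    · intro v hv
      exact hfin v ((hRamFin' v).2 (Or.inl hv))
  refine lt_of_le_of_ne hle ?_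
  intro h
  subst h
  exact hs₃ (hfin p₃ ((hRamFin' p₃).2 (Or.inr (Or.inl rfl))))

/-- Auxiliary: iteration. -/
theorem aux_iterate
    (K : Type) [Field K] [NumberField K] [Algebra K ℂ]
    (A : Type) [Ring A] [Algebra K A]
    (htype : ∀ (A₀ : Type) [Ring A₀] [Algebra K A₀] (E₀ : IntermediateField K ℂ),
      IsQuaternionAlgebra K A₀ → IsClassField K A₀ E₀ → E₀ = ⊥ →
      ∀ O O' : Subring A₀, IsMaximalOrder K A₀ O → IsMaximalOrder K A₀ O' →
        ∃ u : A₀ˣ, ∀ x : A₀, x ∈ O' ↔ (u : A₀) * x * ((u⁻¹ : A₀ˣ) : A₀) ∈ O)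
    (hCFexists : ∀ (A₀ : Type) [Ring A₀] [Algebra K A₀], IsQuaternionAlgebra K A₀ →
      ∃ E₀ : IntermediateField K ℂ, IsClassField K A₀ E₀)
    (hext : ∀ (A₀ : Type) [Ring A₀] [Algebra K A₀]
      (q r : IsDedekindDomain.HeightOneSpectrum (𝓞 K)),
      IsQuaternionAlgebra K A₀ → q ≠ r →
      ¬ RamifiedAtFin K A₀ q → ¬ RamifiedAtFin K A₀ r →
      Nonempty (QuatExtension K A₀ q r))
    (hprimes : ∀ (A₀ : Type) [Ring A₀] [Algebra K A₀] (E₀ : IntermediateField K ℂ),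
      IsQuaternionAlgebra K A₀ → IsClassField K A₀ E₀ → E₀ ≠ ⊥ →
      ∃ q r : IsDedekindDomain.HeightOneSpectrum (𝓞 K), q ≠ r ∧
        ¬ RamifiedAtFin K A₀ q ∧ ¬ RamifiedAtFin K A₀ r ∧
        ¬ SplitsCompletelyAt K ↥E₀ q.asIdeal ∧ ¬ SplitsCompletelyAt K ↥E₀ r.asIdeal) :
    ∀ (n : ℕ) (A₀ : Type) [Ring A₀] [Algebra K A₀] (E₀ : IntermediateField K ℂ),
      IsQuaternionAlgebra K A₀ → IsClassField K A₀ E₀ →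
      Module.finrank K ↥E₀ ≤ n →
      (∀ v : NumberField.InfinitePlace K,
        RamifiedAtInf K A₀ v ↔ RamifiedAtInf K A v) →
      (∀ v : IsDedekindDomain.HeightOneSpectrum (𝓞 K),
        RamifiedAtFin K A v → RamifiedAtFin K A₀ v) →
      Nonempty (TrivialClassFieldQuat K A) := by
  intro n
  induction n with
  | zero =>
    intro A₀ _ _ E₀ hq hcf hrank _ _
    haveI : FiniteDimensional K ↥E₀ := hcf.1.1
    have := Module.finrank_pos (R := K) (M := ↥E₀)
    omega
  | succ n ih =>
    intro A₀ _ _ E₀ hq hcf hrank hinfA hfinA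
    by_cases hbot : E₀ = ⊥
    · refine ⟨⟨A₀, hq, hinfA, hfinA, ?_, ?_⟩⟩
      · intro E₁ hE₁
        have h1 : E₁ ≤ E₀ := hcf.2 E₁ hE₁.1
        have h2 : E₀ ≤ E₁ := hE₁.2 E₀ hcf.1
        exact (le_antisymm h1 h2).trans hbot
      · exact htype A₀ E₀ hq hcf hbot
    · obtain ⟨q, r, hqr, hfq, hfr, hsq, hsr⟩ := hprimes A₀ E₀ hq hcf hbot
      obtain ⟨b⟩ := hext A₀ q r hq hqr hfq hfr
      letI : Ring b.carrier := b.ringC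
      letI : Algebra K b.carrier := b.algC
      obtain ⟨E₁, hE₁⟩ := hCFexists b.carrier b.quat
      have hlt : E₁ < E₀ :=
        aux_shrink K A₀ E₀ hcf q r hsq b.carrier b.ramfin b.raminf E₁ hE₁
      haveI : FiniteDimensional K ↥E₀ := hcf.1.1
      have hrk : Module.finrank K ↥E₁ < Module.finrank K ↥E₀ := by
        have h2 : E₁.toSubalgebra < E₀.toSubalgebra := hlt
        haveI : Module.Finite K (Subalgebra.toSubmodule E₀.toSubalgebra) :=
          inferInstanceAs (Module.Finite K ↥E₀)
        exact Submodule.finrank_lt_finrank_of_lt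
          (s := Subalgebra.toSubmodule E₁.toSubalgebra)
          (t := Subalgebra.toSubmodule E₀.toSubalgebra) h2
      refine ih b.carrier E₁ b.quat hE₁ (by omega) ?_ ?_
      · intro v; exact (b.raminf v).trans (hinfA v)
      · intro v hv; exact (b.ramfin v).2 (Or.inl (hfinA v hv))

/-- Let `A` be a quaternion algebra over `K` unramified at some
real place, and let `p₃, p₄` be finite primes of `K`, unramified in `A`, which
do not split completely in the class field `K(A)`.  If `A'` is the quaternion
algebra with `Ram(A') = Ram(A) ∪ {p₃, p₄}`, then `K(A')` is a proper subfield
of `K(A)` containing `K`; consequently, iterating this construction finitely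
many times produces a quaternion algebra `A*` over `K` with `K(A*) = K`, i.e.
all of whose maximal orders are conjugate.  The hypotheses record the facts
that may be used: the type number of a quaternion algebra with trivial class
field is one, class fields exist, quaternion algebras with prescribed enlarged
ramification exist, and (by Chebotarev) suitable primes exist whenever the
class field is nontrivial. -/
theorem classField_shrinks_and_trivializes
    (K : Type) [Field K] [NumberField K] [Algebra K ℂ]
    (A : Type) [Ring A] [Algebra K A] (hA : IsQuaternionAlgebra K A)
    (hindef : ∃ v : NumberField.InfinitePlace K, v.IsReal ∧ ¬ RamifiedAtInf K A v)
    (E : IntermediateField K ℂ) (hE : IsClassField K A E)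
    (p₃ p₄ : IsDedekindDomain.HeightOneSpectrum (𝓞 K)) (hne : p₃ ≠ p₄)
    (h₃ : ¬ RamifiedAtFin K A p₃) (h₄ : ¬ RamifiedAtFin K A p₄)
    (hs₃ : ¬ SplitsCompletelyAt K ↥E p₃.asIdeal)
    (hs₄ : ¬ SplitsCompletelyAt K ↥E p₄.asIdeal)
    (A' : Type) [Ring A'] [Algebra K A'] (hA' : IsQuaternionAlgebra K A')
    (hRamFin' : ∀ v : IsDedekindDomain.HeightOneSpectrum (𝓞 K),
      RamifiedAtFin K A' v ↔ (RamifiedAtFin K A v ∨ v = p₃ ∨ v = p₄))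
    (hRamInf' : ∀ v : NumberField.InfinitePlace K,
      RamifiedAtInf K A' v ↔ RamifiedAtInf K A v)
    (E' : IntermediateField K ℂ) (hE' : IsClassField K A' E')
    (htype : ∀ (A₀ : Type) [Ring A₀] [Algebra K A₀] (E₀ : IntermediateField K ℂ),
      IsQuaternionAlgebra K A₀ → IsClassField K A₀ E₀ → E₀ = ⊥ →
      ∀ O O' : Subring A₀, IsMaximalOrder K A₀ O → IsMaximalOrder K A₀ O' →
        ∃ u : A₀ˣ, ∀ x : A₀, x ∈ O' ↔ (u : A₀) * x * ((u⁻¹ : A₀ˣ) : A₀) ∈ O)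
    (hCFexists : ∀ (A₀ : Type) [Ring A₀] [Algebra K A₀], IsQuaternionAlgebra K A₀ →
      ∃ E₀ : IntermediateField K ℂ, IsClassField K A₀ E₀)
    (hext : ∀ (A₀ : Type) [Ring A₀] [Algebra K A₀]
      (q r : IsDedekindDomain.HeightOneSpectrum (𝓞 K)),
      IsQuaternionAlgebra K A₀ → q ≠ r →
      ¬ RamifiedAtFin K A₀ q → ¬ RamifiedAtFin K A₀ r →
      Nonempty (QuatExtension K A₀ q r))
    (hprimes : ∀ (A₀ : Type) [Ring A₀] [Algebra K A₀] (E₀ : IntermediateField K ℂ),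
      IsQuaternionAlgebra K A₀ → IsClassField K A₀ E₀ → E₀ ≠ ⊥ →
      ∃ q r : IsDedekindDomain.HeightOneSpectrum (𝓞 K), q ≠ r ∧
        ¬ RamifiedAtFin K A₀ q ∧ ¬ RamifiedAtFin K A₀ r ∧
        ¬ SplitsCompletelyAt K ↥E₀ q.asIdeal ∧ ¬ SplitsCompletelyAt K ↥E₀ r.asIdeal) :
    E' < E ∧ Nonempty (TrivialClassFieldQuat K A) := by
  have hlt : E' < E := aux_shrink K A E hE p₃ p₄ hs₃ A' hRamFin' hRamInf' E' hE'
  refine ⟨hlt, ?_⟩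
  exact aux_iterate K A htype hCFexists hext hprimes (Module.finrank K ↥E)
    A E hA hE le_rfl (fun v => Iff.rfl) (fun v hv => hv)

end
end
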